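/- Let r be a binary relation on a type α satisfying the one-step diamond property: whenever r a b and r a c, either b = c or there exists d with r b d and r c d. Call an element x normal if there is no y with r x y, and call a finite sequence x₀, x₁, …, x_m with r xᵢ x_{i+1} for all i < m an r-chain of length m from x₀. Suppose a₀ ∈ α is accessible with respect to the reversed relation (equivalently, there is no infinite r-chain starting at a₀). Then any two r-chains starting at a₀ and ending at normal elements have the same length and the same final element. -/
import Mathlib

private lemma cons_chain {α : Type*} (r : α → α → Prop) (a b : α) (hab : r a b)
    (m : ℕ) (z : ℕ → α) (hz0 : z 0 = b) (hstep : ∀ i < m, r (z i) (z (i + 1))) :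
    ∃ w : ℕ → α, w 0 = a ∧ (∀ i < m + 1, r (w i) (w (i + 1))) ∧ w (m + 1) = z m := by
  refine ⟨fun i => match i with | 0 => a | i + 1 => z i, rfl, ?_, rfl⟩
  intro i hi
  match i with
  | 0 => simpa [hz0] using hab
  | i + 1 => exact hstep i (by omega)

private lemma exists_max_chain {α : Type*} (r : α → α → Prop) (a : α)
    (hacc : Acc (fun b a => r a b) a) :
    ∃ (m : ℕ) (z : ℕ → α), z 0 = a ∧ (∀ i < m, r (z i) (z (i + 1))) ∧
      ∀ y, ¬ r (z m) y := by
  induction hacc with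
  | intro a ha ih =>
    by_cases h : ∃ b, r a b
    · obtain ⟨b, hb⟩ := h
      obtain ⟨m, z, hz0, hstep, hnorm⟩ := ih b hb
      obtain ⟨w, hw0, hwstep, hwend⟩ := cons_chain r a b hb m z hz0 hstep
      exact ⟨m + 1, w, hw0, hwstep, by rw [hwend]; exact hnorm⟩
    · exact ⟨0, fun _ => a, rfl, by omega, fun y hy => h ⟨y, hy⟩⟩

private lemma aux_unique {α : Type*} (r : α → α → Prop)
    (hdiamond : ∀ a b c, r a b → r a c → b = c ∨ ∃ d, r b d ∧ r c d)
    (a₀ : α) (hacc : Acc (fun b a => r a b) a₀) :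
    ∀ (m₁ m₂ : ℕ) (x₁ x₂ : ℕ → α),
      x₁ 0 = a₀ → x₂ 0 = a₀ →
      (∀ i < m₁, r (x₁ i) (x₁ (i + 1))) →
      (∀ i < m₂, r (x₂ i) (x₂ (i + 1))) →
      (∀ y, ¬ r (x₁ m₁) y) → (∀ y, ¬ r (x₂ m₂) y) →
      m₁ = m₂ ∧ x₁ m₁ = x₂ m₂ := by
  induction hacc with
  | intro a ha ih =>
    intro m₁ m₂ x₁ x₂ hx₁0 hx₂0 hx₁ hx₂ hnorm₁ hnorm₂
    match m₁, m₂ with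
    | 0, 0 => exact ⟨rfl, by rw [hx₁0, hx₂0]⟩
    | 0, n₂ + 1 =>
      exact absurd (hx₂ 0 (by omega)) (by rw [hx₂0, ← hx₁0]; exact hnorm₁ _)
    | n₁ + 1, 0 =>
      exact absurd (hx₁ 0 (by omega)) (by rw [hx₁0, ← hx₂0]; exact hnorm₂ _)
    | n₁ + 1, n₂ + 1 =>
      have h1 : r a (x₁ 1) := by rw [← hx₁0]; exact hx₁ 0 (by omega)
      have h2 : r a (x₂ 1) := by rw [← hx₂0]; exact hx₂ 0 (by omega)
      rcases hdiamond a (x₁ 1) (x₂ 1) h1 h2 with heq | ⟨d, hd1, hd2⟩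
      · have := ih (x₁ 1) h1 n₁ n₂ (fun i => x₁ (i + 1)) (fun i => x₂ (i + 1))
          rfl heq.symm (fun i hi => hx₁ (i + 1) (by omega))
          (fun i hi => hx₂ (i + 1) (by omega)) hnorm₁ hnorm₂
        exact ⟨by omega, this.2⟩
      · have haccd : Acc (fun b a => r a b) d := ((ha (x₁ 1) h1).inv hd1)
        obtain ⟨k, z, hz0, hzstep, hznorm⟩ := exists_max_chain r d haccd
        obtain ⟨w₁, hw₁0, hw₁step, hw₁end⟩ := cons_chain r (x₁ 1) d hd1 k z hz0 hzstep
        obtain ⟨w₂, hw₂0, hw₂step, hw₂end⟩ := cons_chain r (x₂ 1) d hd2 k z hz0 hzstep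
        have e1 := ih (x₁ 1) h1 n₁ (k + 1) (fun i => x₁ (i + 1)) w₁
          rfl hw₁0 (fun i hi => hx₁ (i + 1) (by omega)) hw₁step hnorm₁
          (by rw [hw₁end]; exact hznorm)
        have e2 := ih (x₂ 1) h2 n₂ (k + 1) (fun i => x₂ (i + 1)) w₂
          rfl hw₂0 (fun i hi => hx₂ (i + 1) (by omega)) hw₂step hnorm₂
          (by rw [hw₂end]; exact hznorm)
        exact ⟨by omega, (e1.2.trans hw₁end).trans (e2.2.trans hw₂end).symm⟩

/-- If a relation `r` satisfies the one-step diamond property and `a₀` is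
accessible for the reversed relation (no infinite `r`-chains from `a₀`), then
any two `r`-chains starting at `a₀` and ending at elements with no
`r`-successor have the same length and the same final element. -/
theorem maximal_chains_unique
    {α : Type*} (r : α → α → Prop)
    (hdiamond : ∀ a b c, r a b → r a c → b = c ∨ ∃ d, r b d ∧ r c d)
    (a₀ : α) (hacc : Acc (fun b a => r a b) a₀)
    (m₁ m₂ : ℕ) (x₁ x₂ : ℕ → α)
    (hx₁0 : x₁ 0 = a₀) (hx₂0 : x₂ 0 = a₀)
    (hx₁ : ∀ i < m₁, r (x₁ i) (x₁ (i + 1)))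
    (hx₂ : ∀ i < m₂, r (x₂ i) (x₂ (i + 1)))
    (hnorm₁ : ∀ y, ¬ r (x₁ m₁) y)
    (hnorm₂ : ∀ y, ¬ r (x₂ m₂) y) :
    m₁ = m₂ ∧ x₁ m₁ = x₂ m₂ := by
  exact aux_unique r hdiamond a₀ hacc m₁ m₂ x₁ x₂ hx₁0 hx₂0 hx₁ hx₂ hnorm₁ hnorm₂
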